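/- Let r ≥ 1, let K = k(w_1,…,w_r) be the field of fractions of the polynomial ring k[w_1,…,w_r], fix an index i with 1 ≤ i ≤ r, and let σ_i be the k-algebra automorphism of K determined by σ_i(w_i) = w_i − 1 and σ_i(w_j) = w_j for all j ≠ i. If T ∈ K is nonzero and there exists α ∈ k∖{0} with σ_i(T) = α·T, then α = 1 and T belongs to the subfield k(w_1,…,w_{i−1},w_{i+1},…,w_r) of K generated by k together with the variables w_j for j ≠ i. -/

import Mathlib

universe u
set_option maxHeartbeats 1000000
set_option synthInstance.maxHeartbeats 400000

namespace Stmt2Aux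
variable (F E' : Type*) [Field F] [Field E'] [Algebra F E'] (S : Set E')

noncomputable instance : Algebra (Algebra.adjoin F S) (IntermediateField.adjoin F S) :=
  (Subalgebra.inclusion (IntermediateField.algebra_adjoin_le_adjoin F S)).toRingHom.toAlgebra

instance : IsScalarTower (Algebra.adjoin F S) (IntermediateField.adjoin F S) E' :=
  IsScalarTower.of_algebraMap_eq fun _ => rfl

theorem algebraMap_adjoin_coe (a : Algebra.adjoin F S) :
    ((algebraMap (Algebra.adjoin F S) (IntermediateField.adjoin F S) a : IntermediateField.adjoin F S) : E') = (a : E') :=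
  rfl

instance : IsFractionRing (Algebra.adjoin F S) (IntermediateField.adjoin F S) := by
  constructor
  constructor
  · rintro ⟨y, hy⟩
    have hy0 : y ≠ 0 := mem_nonZeroDivisors_iff_ne_zero.mp hy
    rw [isUnit_iff_ne_zero]
    intro h
    apply hy0
    have : ((algebraMap (Algebra.adjoin F S) (IntermediateField.adjoin F S) y : IntermediateField.adjoin F S) : E') = 0 := by
      rw [h]; rfl
    rw [algebraMap_adjoin_coe] at this
    exact Subtype.ext this
  · rintro ⟨z, hz⟩
    rw [IntermediateField.mem_adjoin_iff] at hz
    obtain ⟨p, q, hpq⟩ := hz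
    set a : E' := MvPolynomial.aeval (Subtype.val : S → E') p with ha
    set b : E' := MvPolynomial.aeval (Subtype.val : S → E') q with hb
    have haA : a ∈ Algebra.adjoin F S := by
      rw [← Subtype.range_coe (s := S), Algebra.adjoin_range_eq_range_aeval]
      exact ⟨p, rfl⟩
    have hbA : b ∈ Algebra.adjoin F S := by
      rw [← Subtype.range_coe (s := S), Algebra.adjoin_range_eq_range_aeval]
      exact ⟨q, rfl⟩
    by_cases hb0 : b = 0
    · refine ⟨⟨0, 1⟩, ?_⟩
      have : z = 0 := by rw [hpq, hb0, div_zero]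
      apply Subtype.ext
      show z * _ = _
      rw [this, zero_mul]
      rfl
    · refine ⟨⟨⟨a, haA⟩, ⟨⟨b, hbA⟩, mem_nonZeroDivisors_iff_ne_zero.mpr (fun h => hb0 (by simpa using congrArg Subtype.val h))⟩⟩, ?_⟩
      apply Subtype.ext
      show z * b = a
      rw [hpq, div_mul_cancel₀ _ hb0]
  · intro x y hxy
    refine ⟨1, ?_⟩
    have := congrArg (Subtype.val) hxy
    rw [algebraMap_adjoin_coe, algebraMap_adjoin_coe] at this
    simpa using Subtype.ext this

theorem transcendental_adjoin_field {x : E'} (h : Transcendental (Algebra.adjoin F S) x) :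
    Transcendental (IntermediateField.adjoin F S) x := fun halg =>
  h ((IsFractionRing.isAlgebraic_iff (Algebra.adjoin F S) (IntermediateField.adjoin F S) E').mpr halg)

end Stmt2Aux


open Polynomial in
theorem Stmt2Aux.const_of_comp_X_sub_one {F : Type*} [Field F] [CharZero F] {p : F[X]}
    (hp : p.comp (X - 1) = p) : p = C (p.eval 0) := by
  have heval : ∀ m : ℕ, p.eval (-(m : F)) = p.eval 0 := by
    intro m
    induction m with
    | zero => norm_num
    | succ n ih =>
      have h2 := congrArg (Polynomial.eval (-(n : F))) hp
      rw [Polynomial.eval_comp] at h2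
      have h3 : (X - 1 : F[X]).eval (-(n : F)) = -((n + 1 : ℕ) : F) := by
        simp; push_cast; ring
      rw [h3] at h2
      rw [h2, ih]
  have hsub : p - C (p.eval 0) = 0 := by
    apply Polynomial.eq_zero_of_infinite_isRoot
    apply Set.Infinite.mono (s := Set.range fun m : ℕ => -(m : F))
    · rintro _ ⟨m, rfl⟩
      simp [Polynomial.IsRoot, heval m]
    · exact Set.infinite_range_of_injective fun a b hab =>
        Nat.cast_injective (neg_injective hab)
  have := sub_eq_zero.mp hsub
  exact this

open Polynomial in
/-- Let `K = k(w_1,…,w_r)` be the fraction field of the polynomial ring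
`k[w_1,…,w_r]` and let `σ` be the `k`-automorphism of `K` with `σ(w_i) = w_i - 1` and
`σ(w_j) = w_j` for `j ≠ i`. If `T ≠ 0` and `σ(T) = α·T` with `α ∈ k∖{0}`, then `α = 1`
and `T` lies in the subfield generated by `k` and the `w_j`, `j ≠ i`. -/
theorem stmt2 {k : Type u} [Field k] [CharZero k] (r : ℕ) (hr : 1 ≤ r) (i : Fin r)
    (K : Type u) [Field K] [Algebra k K] [Algebra (MvPolynomial (Fin r) k) K]
    [IsScalarTower k (MvPolynomial (Fin r) k) K]
    [IsFractionRing (MvPolynomial (Fin r) k) K]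
    (σ : K ≃ₐ[k] K)
    (hσi : σ (algebraMap (MvPolynomial (Fin r) k) K (MvPolynomial.X i)) =
      algebraMap (MvPolynomial (Fin r) k) K (MvPolynomial.X i) - 1)
    (hσj : ∀ j : Fin r, j ≠ i →
      σ (algebraMap (MvPolynomial (Fin r) k) K (MvPolynomial.X j)) =
        algebraMap (MvPolynomial (Fin r) k) K (MvPolynomial.X j))
    (T : K) (hT : T ≠ 0) (α : k) (hα : α ≠ 0) (h : σ T = algebraMap k K α * T) :
    α = 1 ∧ T ∈ IntermediateField.adjoin k
      {w : K | ∃ j : Fin r, j ≠ i ∧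
        w = algebraMap (MvPolynomial (Fin r) k) K (MvPolynomial.X j)} := by
  set R := MvPolynomial (Fin r) k with hR
  set v : Fin r → K := fun j => algebraMap R K (MvPolynomial.X j) with hv
  set S : Set K := {w : K | ∃ j : Fin r, j ≠ i ∧ w = v j} with hSdef
  set x : K := v i with hx
  -- the family v is algebraically independent over k
  have hvind : AlgebraicIndependent k v := by
    have hX : AlgebraicIndependent k (MvPolynomial.X : Fin r → R) :=
      MvPolynomial.algebraicIndependent_X (Fin r) k
    have := hX.map (f := IsScalarTower.toAlgHom k R K)
      (Set.injOn_of_injective (IsFractionRing.injective R K))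
    exact this
  -- S is the range of the restricted family
  have hSr : S = Set.range (fun j : {j : Fin r // j ≠ i} => v j) := by
    ext w
    constructor
    · rintro ⟨j, hj, rfl⟩; exact ⟨⟨j, hj⟩, rfl⟩
    · rintro ⟨⟨j, hj⟩, rfl⟩; exact ⟨j, hj, rfl⟩
  -- x is transcendental over the subalgebra generated by the other variables
  have htrA : Transcendental (Algebra.adjoin k S) x := by
    rw [hSr]
    have hvr : AlgebraicIndependent k (fun j : {j : Fin r // j ≠ i} => v j) :=
      hvind.comp Subtype.val Subtype.val_injective
    rw [← hvr.option_iff_transcendental x]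
    have hfinj : Function.Injective (fun o : Option {j : Fin r // j ≠ i} =>
        Option.elim o i Subtype.val) := by
      rintro (_ | ⟨a, ha⟩) (_ | ⟨b, hb⟩) hab
      · rfl
      · exact absurd hab.symm hb
      · exact absurd hab ha
      · simp only [Option.elim] at hab; subst hab; rfl
    have := hvind.comp _ hfinj
    convert this using 1
    funext o
    cases o <;> rfl
  set E := IntermediateField.adjoin k S with hE
  have htrE : Transcendental E x := Stmt2Aux.transcendental_adjoin_field k K S htrA
  -- sigma fixes E pointwise
  have hfix : ∀ y ∈ E, σ y = y := by
    intro y hy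
    induction hy using IntermediateField.adjoin_induction with
    | mem w hw => obtain ⟨j, hj, rfl⟩ := hw; exact hσj j hj
    | algebraMap a => exact σ.commutes a
    | add a b _ _ ha hb => rw [map_add, ha, hb]
    | inv a _ ha => rw [map_inv₀, ha]
    | mul a b _ _ ha hb => rw [map_mul, ha, hb]
  -- K is generated over E by x
  have hmemT : T ∈ IntermediateField.adjoin E {x} := by
    have htop : IntermediateField.adjoin E {x} = ⊤ := by
      rw [eq_top_iff]
      intro z _
      obtain ⟨a, b, -, rfl⟩ := IsFractionRing.div_surjective (A := R) z
      have hpoly : ∀ p : R, algebraMap R K p ∈ IntermediateField.adjoin E {x} := by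
        intro p
        induction p using MvPolynomial.induction_on with
        | C a =>
          rw [← MvPolynomial.algebraMap_eq, ← IsScalarTower.algebraMap_apply k R K]
          have : algebraMap k K a = algebraMap E K (algebraMap k E a) := by
            rw [← IsScalarTower.algebraMap_apply k E K]
          rw [this]
          exact IntermediateField.algebraMap_mem _ _
        | add p q hp hq => rw [map_add]; exact add_mem hp hq
        | mul_X p j hp =>
          rw [map_mul]
          refine mul_mem hp ?_
          by_cases hji : j = i
          · subst hji
            exact IntermediateField.subset_adjoin _ _ rfl
          · have hmem : v j ∈ E := IntermediateField.subset_adjoin _ _ ⟨j, hji, rfl⟩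
            have : (algebraMap R K) (MvPolynomial.X j) = algebraMap E K ⟨v j, hmem⟩ := rfl
            rw [this]
            exact IntermediateField.algebraMap_mem _ _
      exact div_mem (hpoly a) (hpoly b)
    rw [htop]; trivial
  rw [IntermediateField.mem_adjoin_simple_iff] at hmemT
  obtain ⟨p0, q0, hT0⟩ := hmemT
  have hainj : Function.Injective (Polynomial.aeval x : (↥E)[X] →ₐ[↥E] K) :=
    transcendental_iff_injective.mp htrE
  have haeval_ne : ∀ f : (↥E)[X], f ≠ 0 → Polynomial.aeval x f ≠ 0 := by
    intro f hf h0
    exact hf (hainj (by rw [h0, map_zero]))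
  have hq0K : Polynomial.aeval x q0 ≠ 0 := fun h0 => hT (by rw [hT0, h0, div_zero])
  have hp0K : Polynomial.aeval x p0 ≠ 0 := fun h0 => hT (by rw [hT0, h0, zero_div])
  have hq0 : q0 ≠ 0 := fun h0 => hq0K (by rw [h0, map_zero])
  have hp0 : p0 ≠ 0 := fun h0 => hp0K (by rw [h0, map_zero])
  -- reduce to a coprime representation
  letI : DecidableEq (↥E) := Classical.decEq _
  set d : (↥E)[X] := GCDMonoid.gcd p0 q0 with hd
  have hdne : d ≠ 0 := gcd_ne_zero_of_left hp0
  set p : (↥E)[X] := p0 / d with hpdef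
  set q : (↥E)[X] := q0 / d with hqdef
  have hcop : IsCoprime p q := isCoprime_div_gcd_div_gcd hq0
  have hpd : d * p = p0 := EuclideanDomain.mul_div_cancel' hdne (gcd_dvd_left p0 q0)
  have hqd : d * q = q0 := EuclideanDomain.mul_div_cancel' hdne (gcd_dvd_right p0 q0)
  have hdK : Polynomial.aeval x d ≠ 0 := haeval_ne d hdne
  have hT1 : T = Polynomial.aeval x p / Polynomial.aeval x q := by
    rw [hT0, ← hpd, ← hqd, map_mul, map_mul, mul_div_mul_left _ _ hdK]
  have hqK : Polynomial.aeval x q ≠ 0 := fun h0 => hT (by rw [hT1, h0, div_zero])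
  have hpK : Polynomial.aeval x p ≠ 0 := fun h0 => hT (by rw [hT1, h0, zero_div])
  have hqne : q ≠ 0 := fun h0 => hqK (by rw [h0, map_zero])
  have hpne : p ≠ 0 := fun h0 => hpK (by rw [h0, map_zero])
  -- how σ acts on polynomial evaluations at x
  have hsx : σ x = x - 1 := hσi
  have hsig : ∀ f : (↥E)[X],
      σ (Polynomial.aeval x f) = Polynomial.aeval x (f.comp (X - 1)) := by
    intro f
    induction f using Polynomial.induction_on with
    | C a =>
      rw [Polynomial.aeval_C, Polynomial.C_comp, Polynomial.aeval_C]
      exact hfix _ a.2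
    | add f g hf hg => simp only [map_add, Polynomial.add_comp, hf, hg]
    | monomial n a _ =>
      have hCa : σ ((algebraMap (↥E) K) a) = (algebraMap (↥E) K) a := hfix _ a.2
      simp only [map_mul, map_pow, Polynomial.mul_comp, Polynomial.pow_comp,
        Polynomial.C_comp, Polynomial.X_comp, Polynomial.aeval_C, Polynomial.aeval_X,
        map_sub, map_one, hsx, hCa]
  -- the key polynomial identity
  set β : ↥E := algebraMap k ↥E α with hβ
  have hβK : algebraMap k K α = algebraMap (↥E) K β := by
    rw [hβ, ← IsScalarTower.algebraMap_apply k (↥E) K]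
  have key : p.comp (X - 1) * q = C β * (p * q.comp (X - 1)) := by
    apply hainj
    rw [map_mul, map_mul, map_mul, Polynomial.aeval_C, ← hsig, ← hsig, ← hβK]
    have hσT : σ T = σ (Polynomial.aeval x p) / σ (Polynomial.aeval x q) := by
      rw [hT1, map_div₀]
    have hσq : σ (Polynomial.aeval x q) ≠ 0 := fun h0 =>
      hqK (σ.injective (by rw [h0, map_zero]))
    rw [hσT, hT1] at h
    field_simp at h
    rw [h]
    ring
  -- compare leading coefficients to get β = 1
  have hXdeg : (X - 1 : (↥E)[X]).natDegree = 1 := by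
    rw [show (1 : (↥E)[X]) = C 1 from (Polynomial.C_1).symm]
    exact Polynomial.natDegree_X_sub_C 1
  have hlc : ∀ f : (↥E)[X], (f.comp (X - 1)).leadingCoeff = f.leadingCoeff := by
    intro f
    rw [Polynomial.leadingCoeff_comp (by rw [hXdeg]; exact one_ne_zero)]
    have : (X - 1 : (↥E)[X]).leadingCoeff = 1 := by
      rw [show (1 : (↥E)[X]) = C 1 from (Polynomial.C_1).symm]
      exact Polynomial.monic_X_sub_C 1
    rw [this, one_pow, mul_one]
  have hβ1 : β = 1 := by
    have h1 := congrArg Polynomial.leadingCoeff key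
    rw [Polynomial.leadingCoeff_mul, Polynomial.leadingCoeff_mul,
      Polynomial.leadingCoeff_mul, hlc, hlc, Polynomial.leadingCoeff_C] at h1
    have hlp : p.leadingCoeff ≠ 0 := Polynomial.leadingCoeff_ne_zero.mpr hpne
    have hlq : q.leadingCoeff ≠ 0 := Polynomial.leadingCoeff_ne_zero.mpr hqne
    have hne : p.leadingCoeff * q.leadingCoeff ≠ 0 := mul_ne_zero hlp hlq
    have h2 : β * (p.leadingCoeff * q.leadingCoeff) = 1 * (p.leadingCoeff * q.leadingCoeff) := by
      rw [one_mul]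
      exact h1.symm
    exact mul_right_cancel₀ hne h2
  have hα1 : α = 1 := by
    have : algebraMap k ↥E α = algebraMap k ↥E 1 := by rw [map_one, ← hβ, hβ1]
    exact (algebraMap k ↥E).injective this
  refine ⟨hα1, ?_⟩
  -- now show T is fixed: p and q are constants
  have key2 : p.comp (X - 1) * q = p * q.comp (X - 1) := by
    rw [key, hβ1, Polynomial.C_1, one_mul]
  have hpdvd : p ∣ p.comp (X - 1) := by
    apply hcop.dvd_of_dvd_mul_right
    rw [key2]
    exact dvd_mul_right p _
  have hpcomp_ne : p.comp (X - 1) ≠ 0 := by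
    intro h0
    apply hpK
    apply σ.injective
    rw [hsig, h0, map_zero, map_zero]
  have hpfix : p.comp (X - 1) = p := by
    obtain ⟨c, hc⟩ := hpdvd
    have hcne : c ≠ 0 := by
      intro h0; rw [h0, mul_zero] at hc; exact hpcomp_ne hc
    have hdc : (p.comp (X - 1)).natDegree = p.natDegree := by
      rw [Polynomial.natDegree_comp, hXdeg, mul_one]
    have hdeg : p.natDegree = p.natDegree + c.natDegree := by
      conv_lhs => rw [← hdc, hc, Polynomial.natDegree_mul hpne hcne]
    have hc0 : c.natDegree = 0 := by omega
    have hcC : c = C (c.coeff 0) := Polynomial.eq_C_of_natDegree_eq_zero hc0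
    have h3 : p.leadingCoeff = p.leadingCoeff * c.coeff 0 := by
      conv_lhs => rw [← hlc p, hc, hcC, Polynomial.leadingCoeff_mul, Polynomial.leadingCoeff_C]
    have hlp : p.leadingCoeff ≠ 0 := Polynomial.leadingCoeff_ne_zero.mpr hpne
    have hc1 : c.coeff 0 = 1 := by
      have h4 : p.leadingCoeff * 1 = p.leadingCoeff * c.coeff 0 := by rw [mul_one]; exact h3
      exact (mul_left_cancel₀ hlp h4).symm
    rw [hc, hcC, hc1, Polynomial.C_1, mul_one]
  have hq2 : p * q.comp (X - 1) = p * q := by rw [← key2, hpfix]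
  have hqfix : q.comp (X - 1) = q := mul_left_cancel₀ hpne hq2
  haveI : CharZero (↥E) := charZero_of_injective_algebraMap (algebraMap k ↥E).injective
  have hpC : p = C (p.eval 0) := Stmt2Aux.const_of_comp_X_sub_one hpfix
  have hqC : q = C (q.eval 0) := Stmt2Aux.const_of_comp_X_sub_one hqfix
  have hTfin : T = algebraMap (↥E) K (p.eval 0) / algebraMap (↥E) K (q.eval 0) := by
    rw [hT1]
    conv_lhs => rw [hpC, hqC]
    rw [Polynomial.aeval_C, Polynomial.aeval_C]
  rw [hTfin]
  exact div_mem (p.eval 0).2 (q.eval 0).2
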